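/- Let f: ℝ × ℝ → ℝ be continuous, locally Lipschitz in x, and coercive in the sense that limsup_{|x|→∞} sup_{t∈ℝ} f(t,x)/|x| < 0. Then every bounded solution of x' = f(t,x) which is defined on a half-line [s, ∞) remains in a fixed compact set: there exists ρ > 0 (independent of the solution) such that any solution defined and bounded on [s,∞) satisfies limsup_{t→∞} |x(t)| ≤ ρ; moreover the set of bounded solutions on ℝ, if nonempty, is uniformly bounded by ρ. -/

import Mathlib

open Filter

/-- Fencing on a half line against an affine barrier `B t = y a + m * (t - a)`. -/
lemma fence_affine (y g : ℝ → ℝ) (a m : ℝ)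
    (hderiv : ∀ t ∈ Set.Ici a, HasDerivAt y (g t) t)
    (hneg : ∀ t ∈ Set.Ici a, y t = y a + m * (t - a) → g t < m) :
    ∀ t ∈ Set.Ici a, y t ≤ y a + m * (t - a) := by
  intro t ht
  have hB : ∀ u : ℝ, HasDerivAt (fun u => y a + m * (u - a)) m u := by
    intro u
    simpa using (((hasDerivAt_id u).sub_const a).const_mul m).const_add (y a)
  have := image_le_of_deriv_right_lt_deriv_boundary
    (f := y) (f' := g) (a := a) (b := t)
    (B := fun u => y a + m * (u - a)) (B' := fun _ => m)
    (fun u hu => ((hderiv u hu.1).continuousAt).continuousWithinAt)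
    (fun u hu => (hderiv u hu.1).hasDerivWithinAt)
    (by simp) hB
    (fun u hu hy => hneg u hu.1 hy)
  exact this ⟨ht, le_refl t⟩

/-- Invariance of `{y ≤ c}` when the derivative is negative at the boundary. -/
lemma fence_const (y g : ℝ → ℝ) (a c : ℝ)
    (hderiv : ∀ t ∈ Set.Ici a, HasDerivAt y (g t) t)
    (hneg : ∀ t ∈ Set.Ici a, y t = c → g t < 0)
    (hya : y a ≤ c) : ∀ t ∈ Set.Ici a, y t ≤ c := by
  intro t ht
  have hB : ∀ u : ℝ, HasDerivAt (fun _ : ℝ => c) 0 u := fun u => hasDerivAt_const u c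
  have := image_le_of_deriv_right_lt_deriv_boundary
    (f := y) (f' := g) (a := a) (b := t)
    (B := fun _ => c) (B' := fun _ => 0)
    (fun u hu => ((hderiv u hu.1).continuousAt).continuousWithinAt)
    (fun u hu => (hderiv u hu.1).hasDerivWithinAt)
    hya hB
    (fun u hu hy => hneg u hu.1 hy)
  exact this ⟨ht, le_refl t⟩

/-- If `y` starts below `-ρ₀` and satisfies the coercive differential inequality, it cannot
stay bounded on the half line. -/
lemma escape (δ ρ₀ : ℝ) (hδ : 0 < δ) (hρ : 0 < ρ₀) (y g : ℝ → ℝ) (a : ℝ)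
    (hderiv : ∀ t ∈ Set.Ici a, HasDerivAt y (g t) t)
    (hco : ∀ t ∈ Set.Ici a, ρ₀ ≤ |y t| → g t ≤ -δ * |y t|)
    (hya : y a < -ρ₀)
    (M : ℝ) (hbdd : ∀ t ∈ Set.Ici a, |y t| ≤ M) : False := by
  have hk : 0 < δ * ρ₀ := mul_pos hδ hρ
  -- Step A : y t ≤ y a for all t ≥ a
  have hA : ∀ t ∈ Set.Ici a, y t ≤ y a := by
    refine fence_const y g a (y a) hderiv ?_ le_rfl
    intro t ht hy
    have habs : ρ₀ ≤ |y t| := by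
      rw [hy, abs_of_neg (by linarith)]; linarith
    have := hco t ht habs
    have : g t ≤ -δ * ρ₀ := le_trans this (by nlinarith)
    linarith
  -- Step B : linear decay
  have hB : ∀ t ∈ Set.Ici a, y t ≤ y a + (-(δ * ρ₀ / 2)) * (t - a) := by
    refine fence_affine y g a (-(δ * ρ₀ / 2)) hderiv ?_
    intro t ht hy
    have hle : y t ≤ y a := hA t ht
    have habs : ρ₀ ≤ |y t| := by
      rw [abs_of_neg (by linarith)]; linarith
    have := hco t ht habs
    nlinarith
  -- contradiction for large t
  set T : ℝ := max a (a + (2 * (M + |y a| + 1)) / (δ * ρ₀)) with hT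
  have hTa : a ≤ T := le_max_left _ _
  have h1 := hB T hTa
  have h2 := hbdd T hTa
  have h3 : a + (2 * (M + |y a| + 1)) / (δ * ρ₀) ≤ T := le_max_right _ _
  have hM0 : 0 ≤ M := le_trans (abs_nonneg _) (hbdd a (Set.mem_Ici.2 le_rfl))
  have h4 : (2 * (M + |y a| + 1)) / (δ * ρ₀) ≤ T - a := by linarith
  have h5 : 2 * (M + |y a| + 1) ≤ (δ * ρ₀) * (T - a) := by
    rw [div_le_iff₀ hk] at h4; linarith [h4]
  have h6 : -M ≤ y T := neg_le_of_abs_le h2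
  have h7 : |y a| ≥ -(y a) := neg_le_abs _
  nlinarith

/-- coercivity forces dissipativity. There is a `ρ > 0` such that every
solution of `x' = f(t,x)` defined and bounded on a half-line `[s,∞)` satisfies
`limsup_{t→∞} |x(t)| ≤ ρ`, and every globally bounded solution stays in `[-ρ, ρ]`. -/
theorem coercive_dissipativity
    (f : ℝ → ℝ → ℝ)
    (hcont : Continuous fun p : ℝ × ℝ => f p.1 p.2)
    (hlip : ∀ t : ℝ, LocallyLipschitz (f t))
    (hcoer : ∃ δ > (0:ℝ), ∃ ρ₀ > (0:ℝ), ∀ t x : ℝ, ρ₀ ≤ |x| → f t x ≤ -δ * |x|) :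
    ∃ ρ > (0:ℝ),
      (∀ (x : ℝ → ℝ) (s : ℝ),
        (∀ t ∈ Set.Ici s, HasDerivAt x (f t (x t)) t) →
        (∃ M : ℝ, ∀ t ∈ Set.Ici s, |x t| ≤ M) →
        Filter.limsup (fun t => |x t|) Filter.atTop ≤ ρ) ∧
      (∀ x : ℝ → ℝ,
        (∀ t : ℝ, HasDerivAt x (f t (x t)) t) →
        (∃ M : ℝ, ∀ t : ℝ, |x t| ≤ M) →
        ∀ t : ℝ, |x t| ≤ ρ) := by
  obtain ⟨δ, hδ, ρ₀, hρ, hco⟩ := hcoer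
  have hk : 0 < δ * ρ₀ := mul_pos hδ hρ
  -- lower bound on any half line
  have lower : ∀ (x : ℝ → ℝ) (s : ℝ),
      (∀ t ∈ Set.Ici s, HasDerivAt x (f t (x t)) t) →
      (∃ M : ℝ, ∀ t ∈ Set.Ici s, |x t| ≤ M) →
      ∀ t ∈ Set.Ici s, -ρ₀ ≤ x t := by
    intro x s hderiv ⟨M, hM⟩ t₀ ht₀
    by_contra h
    push_neg at h
    refine escape δ ρ₀ hδ hρ x (fun t => f t (x t)) t₀
      (fun t ht => hderiv t (Set.mem_Ici.2 (le_trans ht₀ ht)))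
      (fun t ht habs => hco t (x t) habs) h M
      (fun t ht => hM t (Set.mem_Ici.2 (le_trans ht₀ ht)))
  refine ⟨ρ₀, hρ, ?_, ?_⟩
  · -- half-line limsup bound
    intro x s hderiv hbdd
    obtain ⟨M, hM⟩ := hbdd
    -- there is a time where x ≤ ρ₀
    have hex : ∃ t₁ ∈ Set.Ici s, x t₁ ≤ ρ₀ := by
      by_contra h
      push_neg at h
      -- x t > ρ₀ for all t ≥ s : linear decay gives contradiction
      have hdec : ∀ t ∈ Set.Ici s, x t ≤ x s + (-(δ * ρ₀ / 2)) * (t - s) := by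
        refine fence_affine x (fun t => f t (x t)) s (-(δ * ρ₀ / 2)) hderiv ?_
        intro t ht _
        have hx : ρ₀ < x t := h t ht
        have habs : ρ₀ ≤ |x t| := by rw [abs_of_pos (by linarith)]; linarith
        have := hco t (x t) habs
        have h2 : |x t| = x t := abs_of_pos (by linarith)
        rw [h2] at this
        nlinarith
      set T : ℝ := max s (s + (2 * (|x s| + ρ₀ + 1)) / (δ * ρ₀)) with hT
      have hTs : s ≤ T := le_max_left _ _
      have h1 := hdec T hTs
      have h2 : ρ₀ < x T := h T hTs
      have h3 : s + (2 * (|x s| + ρ₀ + 1)) / (δ * ρ₀) ≤ T := le_max_right _ _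
      have h4 : (2 * (|x s| + ρ₀ + 1)) / (δ * ρ₀) ≤ T - s := by linarith
      have h5 : 2 * (|x s| + ρ₀ + 1) ≤ (δ * ρ₀) * (T - s) := by
        rw [div_le_iff₀ hk] at h4; linarith
      have h6 : x s ≤ |x s| := le_abs_self _
      nlinarith
    obtain ⟨t₁, ht₁, hxt₁⟩ := hex
    -- invariance of x ≤ ρ₀ beyond t₁
    have hinv : ∀ t ∈ Set.Ici t₁, x t ≤ ρ₀ := by
      refine fence_const x (fun t => f t (x t)) t₁ ρ₀
        (fun t ht => hderiv t (Set.mem_Ici.2 (le_trans ht₁ ht))) ?_ hxt₁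
      intro t ht hy
      have habs : ρ₀ ≤ |x t| := by rw [hy, abs_of_pos hρ]
      have := hco t (x t) habs
      nlinarith
    have hlow := lower x s hderiv ⟨M, hM⟩
    have hev : ∀ᶠ t in atTop, |x t| ≤ ρ₀ := by
      filter_upwards [eventually_ge_atTop t₁] with t ht
      exact abs_le.2 ⟨hlow t (le_trans ht₁ ht), hinv t ht⟩
    exact limsup_le_of_le
      (isCoboundedUnder_le_of_le atTop (fun t => abs_nonneg (x t))) hev
  · -- globally bounded solutions
    intro x hderiv ⟨M, hM⟩ t₀
    have hlow : -ρ₀ ≤ x t₀ :=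
      lower x t₀ (fun t _ => hderiv t) ⟨M, fun t _ => hM t⟩ t₀ (Set.mem_Ici.2 le_rfl)
    have hup : x t₀ ≤ ρ₀ := by
      by_contra h
      push_neg at h
      -- time-reversed, negated solution escapes
      set y : ℝ → ℝ := fun u => -x (2 * t₀ - u) with hy
      set g : ℝ → ℝ := fun u => f (2 * t₀ - u) (x (2 * t₀ - u)) with hg
      have hyderiv : ∀ u ∈ Set.Ici t₀, HasDerivAt y (g u) u := by
        intro u _
        have h1 : HasDerivAt (fun u : ℝ => 2 * t₀ - u) (-1) u := by
          simpa using (hasDerivAt_id' u).const_sub (2*t₀)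
        have h2 : HasDerivAt (fun u : ℝ => x (2 * t₀ - u))
            (f (2 * t₀ - u) (x (2 * t₀ - u)) * (-1)) u :=
          (hderiv (2 * t₀ - u)).comp u h1
        have h3 := h2.neg
        have h4 : g u = -(f (2 * t₀ - u) (x (2 * t₀ - u)) * (-1)) := by simp [hg]
        rw [hy, h4]; exact h3
      have hyco : ∀ u ∈ Set.Ici t₀, ρ₀ ≤ |y u| → g u ≤ -δ * |y u| := by
        intro u _ habs
        have : |y u| = |x (2 * t₀ - u)| := abs_neg _
        rw [this] at habs ⊢
        exact hco _ _ habs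
      have hya : y t₀ < -ρ₀ := by
        have he : (2:ℝ) * t₀ - t₀ = t₀ := by ring
        simp only [hy, he]
        linarith
      exact escape δ ρ₀ hδ hρ y g t₀ hyderiv hyco hya M
        (fun u _ => by simpa [hy, abs_neg] using hM (2 * t₀ - u))
    exact abs_le.2 ⟨hlow, hup⟩
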